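/- Let G be a finite connected simple graph on n ≥ 1 vertices with diameter D, and let k ≥ 1 be an integer. Then for every integer a ≥ 1, the inequality T_{a·k}(G) ≤ 6·√a · T_k(G) holds (as an inequality of real numbers). -/

import Mathlib

open SimpleGraph

/-- The ball of radius `t` around `v`: all vertices at hop distance at most `t` from `v`. -/
def SimpleGraph.broadcastBall {V : Type*} (G : SimpleGraph V) (v : V) (t : ℕ) : Set V :=
  {w | G.dist v w ≤ t}

/-- The broadcast quality of a vertex `v`:
`T_k(v) = min ({t : t ≥ 1 and t·|B_t(v)| ≥ k} ∪ {D})` where `D` is the diameter. -/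
noncomputable def SimpleGraph.broadcastQuality {V : Type*} (G : SimpleGraph V) (k : ℕ)
    (v : V) : ℕ :=
  sInf ({t : ℕ | 1 ≤ t ∧ k ≤ t * (G.broadcastBall v t).ncard} ∪ {G.diam})

/-- The broadcast quality of the graph: `T_k(G) = max_v T_k(v)`. -/
noncomputable def SimpleGraph.broadcastQualityGraph {V : Type*} [Fintype V]
    (G : SimpleGraph V) (k : ℕ) : ℕ :=
  Finset.univ.sup (fun v => G.broadcastQuality k v)

private lemma dist_getVert_le' {V : Type*} {G : SimpleGraph V} (hconn : G.Connected)
    {v w : V} (p : G.Walk v w) : ∀ d : ℕ, G.dist v (p.getVert d) ≤ d := by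
  induction p with
  | nil =>
    intro d
    rw [Walk.getVert_of_length_le _ (by simp), SimpleGraph.dist_self]
    exact Nat.zero_le d
  | @cons u x w h q ih =>
    intro d
    cases d with
    | zero => simp [Walk.getVert_zero, SimpleGraph.dist_self]
    | succ d =>
      rw [Walk.getVert_cons_succ]
      calc G.dist u (q.getVert d) ≤ G.dist u x + G.dist x (q.getVert d) :=
            hconn.dist_triangle
        _ ≤ 1 + d := by
            have h1 : G.dist u x ≤ 1 := by
              have := SimpleGraph.dist_le (Walk.cons h Walk.nil)
              simpa using this
            exact add_le_add h1 (ih d)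
        _ = d + 1 := by omega

private lemma exists_vertex_at_dist {V : Type*} {G : SimpleGraph V} (hconn : G.Connected)
    (v w : V) (d : ℕ) (hd : d ≤ G.dist v w) : ∃ u, G.dist v u = d := by
  obtain ⟨p, hp⟩ := hconn.exists_walk_length_eq_dist v w
  refine ⟨p.getVert d, le_antisymm (dist_getVert_le' hconn p d) ?_⟩
  have h2 : G.dist (p.getVert d) w ≤ G.dist v w - d := by
    have hrev := dist_getVert_le' hconn p.reverse (p.length - d)
    rw [Walk.getVert_reverse] at hrev
    rw [Nat.sub_sub_self (by omega : d ≤ p.length)] at hrev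
    rw [SimpleGraph.dist_comm]
    omega
  have h3 := hconn.dist_triangle (u := v) (v := p.getVert d) (w := w)
  omega

private lemma sum_ncard_le_ncard {V : Type*} [Fintype V] {m : ℕ} (S : Fin m → Set V)
    (B : Set V) (hsub : ∀ i, S i ⊆ B)
    (hdisj : ∀ i j, i ≠ j → Disjoint (S i) (S j)) :
    ∑ i, (S i).ncard ≤ B.ncard := by
  classical
  have key : ∀ i, (S i).ncard = ((S i).toFinite.toFinset).card := fun i =>
    Set.ncard_eq_toFinset_card _ _
  rw [Set.ncard_eq_toFinset_card B (Set.toFinite B)]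
  simp_rw [key]
  rw [← Finset.card_biUnion]
  · apply Finset.card_le_card
    intro x hx
    simp only [Finset.mem_biUnion, Set.Finite.mem_toFinset] at hx ⊢
    obtain ⟨i, _, hxi⟩ := hx
    exact hsub i hxi
  · intro i _ j _ hij
    rw [Function.onFun, Finset.disjoint_left]
    intro x hxi hxj
    simp only [Set.Finite.mem_toFinset] at hxi hxj
    exact (hdisj i j hij).le_bot ⟨hxi, hxj⟩

theorem growth_of_Tk {V : Type*} [Fintype V] [Nonempty V] (G : SimpleGraph V)
    (hconn : G.Connected) (k : ℕ) (hk : 1 ≤ k) (a : ℕ) (ha : 1 ≤ a) :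
    (G.broadcastQualityGraph (a * k) : ℝ) ≤
      6 * Real.sqrt a * (G.broadcastQualityGraph k : ℝ) := by
  classical
  set T := G.broadcastQualityGraph k with hTdef
  have hsqrt1 : (1:ℝ) ≤ Real.sqrt a := by
    rw [show (1:ℝ) = Real.sqrt 1 by simp]
    exact Real.sqrt_le_sqrt (by exact_mod_cast ha)
  have hsqrt0 : (0:ℝ) ≤ Real.sqrt a := Real.sqrt_nonneg _
  have hTle : ∀ u, G.broadcastQuality k u ≤ T := fun u => Finset.le_sup (Finset.mem_univ u)
  have hmemset : ∀ (c : ℕ) (u : V), G.broadcastQuality c u ∈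
      ({t : ℕ | 1 ≤ t ∧ c ≤ t * (G.broadcastBall u t).ncard} ∪ {G.diam}) :=
    fun c u => Nat.sInf_mem ⟨G.diam, Or.inr rfl⟩
  have hbq_le : ∀ (c t : ℕ) (u : V), 1 ≤ t → c ≤ t * (G.broadcastBall u t).ncard →
      G.broadcastQuality c u ≤ t := fun c t u h1 h2 => Nat.sInf_le (Or.inl ⟨h1, h2⟩)
  have hbq_le_diam : ∀ (c : ℕ) (u : V), G.broadcastQuality c u ≤ G.diam :=
    fun c u => Nat.sInf_le (Or.inr rfl)
  have hTc : (0:ℝ) ≤ (T:ℝ) := Nat.cast_nonneg T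
  by_cases hD : G.diam ≤ T
  · -- diameter already small
    have hnat : G.broadcastQualityGraph (a*k) ≤ T :=
      Finset.sup_le fun v _ => le_trans (hbq_le_diam _ v) hD
    have h1 : ((G.broadcastQualityGraph (a*k)) : ℝ) ≤ (T:ℝ) := by exact_mod_cast hnat
    have h2 := mul_le_mul_of_nonneg_right hsqrt1 hTc
    have h3 : (0:ℝ) ≤ Real.sqrt a * T := mul_nonneg hsqrt0 hTc
    nlinarith
  · push_neg at hD
    -- every vertex satisfies the ball condition at radius T
    have hkey : ∀ u, 1 ≤ T ∧ k ≤ T * (G.broadcastBall u T).ncard := by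
      intro u
      have h := hmemset k u
      rw [Set.mem_union] at h
      rcases h with hp | hd
      · obtain ⟨h1, h2⟩ := hp
        have hτ : G.broadcastQuality k u ≤ T := hTle u
        have hsub : G.broadcastBall u (G.broadcastQuality k u) ⊆ G.broadcastBall u T :=
          fun x hx => le_trans hx hτ
        have hcard := Set.ncard_le_ncard hsub (Set.toFinite _)
        exact ⟨le_trans h1 hτ, le_trans h2 (Nat.mul_le_mul hτ hcard)⟩
      · exfalso
        rw [Set.mem_singleton_iff] at hd
        have := hTle u
        omega
    have hT1 : 1 ≤ T := (hkey (Classical.arbitrary V)).1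
    have hT1' : (1:ℝ) ≤ (T:ℝ) := by exact_mod_cast hT1
    set m := Nat.sqrt ((a-1)/2) + 1 with hmdef
    have hm1 : 1 ≤ m := Nat.le_add_left 1 _
    have hm2 : a ≤ 2 * (m * m) := by
      have hq : (a-1)/2 < m * m := Nat.lt_succ_sqrt ((a-1)/2)
      generalize m * m = P at hq ⊢
      omega
    set L := (m-1)*(2*T+1) + T with hLdef
    have hLT : T ≤ L := Nat.le_add_left T _
    -- the key real inequality : 2L ≤ 6√a·T
    have hmr1 : (1:ℝ) ≤ (m:ℝ) := by exact_mod_cast hm1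
    have hP0 : (0:ℝ) ≤ (m:ℝ) - 1 := by linarith
    have hP2 : 2 * ((m:ℝ) - 1)^2 + 1 ≤ (a:ℝ) := by
      have hq : (m-1) * (m-1) ≤ (a-1)/2 := by
        have : m - 1 = Nat.sqrt ((a-1)/2) := by omega
        rw [this]; exact Nat.sqrt_le ((a-1)/2)
      have hnat : 2 * ((m-1) * (m-1)) + 1 ≤ a := by
        generalize hP : (m-1) * (m-1) = P at hq
        omega
      have hcast : (((m-1) : ℕ) : ℝ) = (m:ℝ) - 1 := by
        push_cast [Nat.cast_sub hm1]; ring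
      calc 2 * ((m:ℝ) - 1)^2 + 1 = ((2 * ((m-1) * (m-1)) + 1 : ℕ) : ℝ) := by
            push_cast [hcast]; ring
        _ ≤ (a:ℝ) := by exact_mod_cast hnat
    have hs2 : Real.sqrt a ^ 2 = (a:ℝ) := Real.sq_sqrt (by positivity)
    have hP1 : ((m:ℝ) - 1) + 1/3 ≤ Real.sqrt a := by
      nlinarith [sq_nonneg ((m:ℝ) - 1 - 1/3), sq_nonneg (Real.sqrt a - ((m:ℝ)-1) - 1/3)]
    have hLcast : ((L:ℕ) : ℝ) = ((m:ℝ) - 1) * (2*(T:ℝ)+1) + (T:ℝ) := by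
      rw [hLdef]
      push_cast [Nat.cast_sub hm1]
      ring
    have hreal2L : 2 * ((L:ℕ) : ℝ) ≤ 6 * Real.sqrt a * (T:ℝ) := by
      rw [hLcast]
      have h1 := mul_le_mul_of_nonneg_right hP1 hTc
      have h2 : (0:ℝ) ≤ ((m:ℝ) - 1) * ((T:ℝ) - 1) := mul_nonneg hP0 (by linarith)
      nlinarith
    by_cases hDL : G.diam ≤ 2*L
    · have hnat : G.broadcastQualityGraph (a*k) ≤ 2*L :=
        Finset.sup_le fun v _ => le_trans (hbq_le_diam _ v) hDL
      have h1 : ((G.broadcastQualityGraph (a*k)) : ℝ) ≤ ((2*L : ℕ):ℝ) := by exact_mod_cast hnat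
      have h2 : ((2*L : ℕ):ℝ) = 2 * ((L:ℕ):ℝ) := by push_cast; ring
      linarith
    · push_neg at hDL
      suffices hS : ∀ v, G.broadcastQuality (a*k) v ≤ L + T by
        have hnat : G.broadcastQualityGraph (a*k) ≤ L + T := Finset.sup_le fun v _ => hS v
        have h1 : ((G.broadcastQualityGraph (a*k)) : ℝ) ≤ ((L+T : ℕ):ℝ) := by exact_mod_cast hnat
        have h2 : ((L+T:ℕ):ℝ) ≤ 2 * ((L:ℕ):ℝ) := by
          have : (T:ℝ) ≤ (L:ℝ) := by exact_mod_cast hLT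
          push_cast
          linarith
        linarith
      intro v
      -- find a far-away vertex
      obtain ⟨x, y, hxy⟩ := G.exists_dist_eq_diam
      have hvw : ∃ w, L ≤ G.dist v w := by
        have h1 := hconn.dist_triangle (u := x) (v := v) (w := y)
        have hx' : G.dist x v = G.dist v x := SimpleGraph.dist_comm
        rcases le_or_gt L (G.dist v x) with h | h
        · exact ⟨x, h⟩
        · exact ⟨y, by omega⟩
      obtain ⟨w, hw⟩ := hvw
      -- chain of centers
      have hui : ∀ i : Fin m, ∃ z, G.dist v z = (i:ℕ)*(2*T+1) + T := by
        intro i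
        apply exists_vertex_at_dist hconn v w
        have hile : (i:ℕ) ≤ m - 1 := by have := i.isLt; omega
        have : (i:ℕ)*(2*T+1) + T ≤ L := by
          rw [hLdef]
          exact Nat.add_le_add_right (Nat.mul_le_mul_right _ hile) T
        omega
      choose u hu using hui
      have hdistle : ∀ i : Fin m, G.dist v (u i) ≤ L := by
        intro i
        rw [hu i, hLdef]
        have hile : (i:ℕ) ≤ m - 1 := by have := i.isLt; omega
        exact Nat.add_le_add_right (Nat.mul_le_mul_right _ hile) T
      -- disjointness of the balls
      have hmain : ∀ i j : Fin m, (i:ℕ) < (j:ℕ) →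
          Disjoint (G.broadcastBall (u i) T) (G.broadcastBall (u j) T) := by
        intro i j hij
        rw [Set.disjoint_left]
        intro z hzi hzj
        have h1 : G.dist (u i) z ≤ T := hzi
        have h2 : G.dist (u j) z ≤ T := hzj
        have h3 : G.dist v (u j) ≤ G.dist v (u i) + G.dist (u i) (u j) := hconn.dist_triangle
        have h4 : G.dist (u i) (u j) ≤ G.dist (u i) z + G.dist z (u j) := hconn.dist_triangle
        have h5 : G.dist z (u j) = G.dist (u j) z := SimpleGraph.dist_comm
        have hui' := hu i
        have huj' := hu j
        have h6 : ((i:ℕ)+1)*(2*T+1) ≤ (j:ℕ)*(2*T+1) := Nat.mul_le_mul_right _ hij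
        have h7 : (i:ℕ)*(2*T+1) + (2*T+1) ≤ (j:ℕ)*(2*T+1) := by
          calc (i:ℕ)*(2*T+1) + (2*T+1) = ((i:ℕ)+1)*(2*T+1) := by ring
            _ ≤ (j:ℕ)*(2*T+1) := h6
        generalize (i:ℕ)*(2*T+1) = A at hui' h7
        generalize (j:ℕ)*(2*T+1) = B at huj' h7
        omega
      have hdisj : ∀ i j : Fin m, i ≠ j → Disjoint (G.broadcastBall (u i) T) (G.broadcastBall (u j) T) := by
        intro i j hij
        rcases Nat.lt_or_ge (i:ℕ) (j:ℕ) with h | h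
        · exact hmain i j h
        · have : (j:ℕ) < (i:ℕ) := by
            rcases Nat.lt_or_ge (j:ℕ) (i:ℕ) with h' | h'
            · exact h'
            · exact absurd (Fin.ext (le_antisymm h' h)) hij
          exact (hmain j i this).symm
      have hsub : ∀ i : Fin m, G.broadcastBall (u i) T ⊆ G.broadcastBall v (L + T) := by
        intro i z hz
        have h1 : G.dist (u i) z ≤ T := hz
        have h3 : G.dist v z ≤ G.dist v (u i) + G.dist (u i) z := hconn.dist_triangle
        have h4 := hdistle i
        show G.dist v z ≤ L + T
        omega
      have hsum := sum_ncard_le_ncard (fun i => G.broadcastBall (u i) T) (G.broadcastBall v (L+T)) hsub hdisj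
      set N := (G.broadcastBall v (L+T)).ncard with hN
      have hmk : m * k ≤ T * N := by
        calc m * k = ∑ _i : Fin m, k := by
              simp [Finset.sum_const, Finset.card_univ]
          _ ≤ ∑ i : Fin m, T * (G.broadcastBall (u i) T).ncard :=
              Finset.sum_le_sum fun i _ => (hkey (u i)).2
          _ = T * ∑ i : Fin m, (G.broadcastBall (u i) T).ncard := by rw [Finset.mul_sum]
          _ ≤ T * N := Nat.mul_le_mul_left _ hsum
      have h2mT : 2*m*T ≤ L + T := by
        have hmrw : m = (m-1) + 1 := by omega
        have h : (m-1) * (2*T) ≤ (m-1)*(2*T+1) := Nat.mul_le_mul_left _ (by omega)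
        calc 2*m*T = 2*((m-1)+1)*T := by rw [← hmrw]
          _ = (m-1)*(2*T) + 2*T := by ring
          _ ≤ (m-1)*(2*T+1) + 2*T := Nat.add_le_add_right h _
          _ = L + T := by rw [hLdef]; ring
      have hfinal : a * k ≤ (L+T) * N := by
        calc a * k ≤ (2*(m*m)) * k := Nat.mul_le_mul_right k hm2
          _ = (2*m)*(m*k) := by ring
          _ ≤ (2*m)*(T*N) := Nat.mul_le_mul_left _ hmk
          _ = (2*m*T)*N := by ring
          _ ≤ (L+T)*N := Nat.mul_le_mul_right N h2mT
      exact hbq_le (a*k) (L+T) v (by omega) hfinal
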